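/- Let X be a locally compact Hausdorff space, α a homeomorphism of X, and w a bounded continuous function on X. Suppose that: (i) for every compact K ⊆ X there exists N such that α^n(K) ∩ K = ∅ for all n ≥ N; (ii) for every compact K ⊆ X, lim_{n→∞} sup_{t∈K} ∏_{j=0}^{n-1} |w(α^{j-n}(t))| = 0 and lim_{n→∞} sup_{t∈K} ∏_{j=0}^{n-1} |w(α^j(t))|^{-1} = 0, where w > 0 and sup‖w‖_∞ + sup‖w^{-1}‖_∞ < ∞. Then the operator U_{α,w}(f) := w·(f∘α) is topologically mixing on C₀(X). -/

import Mathlib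

open Filter ZeroAtInfty Set
set_option linter.unusedSectionVars false
set_option linter.unusedVariables false

section aux
variable {X : Type*} [TopologicalSpace X] [T2Space X] (α : X ≃ₜ X) (w : X → ℝ)


lemma le_biSup_cpt {K : Set X} (hK : IsCompact K) {F : X → ℝ} (hF : Continuous F)
    (hF0 : ∀ t, 0 ≤ F t) {t : X} (ht : t ∈ K) : F t ≤ ⨆ s ∈ K, F s := by
  obtain ⟨M, hM⟩ := (hK.image hF).bddAbove
  have key : ∀ s : X, (⨆ _ : s ∈ K, F s) ≤ max M 0 := by
    intro s
    by_cases hs : s ∈ K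
    · rw [ciSup_pos (p := s ∈ K) (f := fun _ => F s) hs]
      exact le_max_of_le_left (hM ⟨s, hs, rfl⟩)
    · have : IsEmpty (s ∈ K) := ⟨hs⟩
      rw [Real.iSup_of_isEmpty]
      exact le_max_right _ _
  have hb : BddAbove (Set.range fun s => ⨆ _ : s ∈ K, F s) := by
    refine ⟨max M 0, ?_⟩
    rintro y ⟨s, rfl⟩
    exact key s
  calc F t = ⨆ _ : t ∈ K, F t := (ciSup_pos (p := t ∈ K) (f := fun _ => F t) ht).symm
    _ ≤ ⨆ s ∈ K, F s := le_ciSup hb t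

lemma biSup_nonneg {K : Set X} {F : X → ℝ} (hF0 : ∀ t, 0 ≤ F t) :
    0 ≤ ⨆ s ∈ K, F s :=
  Real.iSup_nonneg fun s => Real.iSup_nonneg fun _ => hF0 s


end aux

section aux3
variable {X : Type*} [TopologicalSpace X] [LocallyCompactSpace X] [T2Space X]


-- C₀ from compactly supported continuous
noncomputable def mkC0 (f : X → ℝ) (hc : Continuous f) (hs : HasCompactSupport f) :
    C₀(X, ℝ) := ⟨⟨f, hc⟩, hs.is_zero_at_infty⟩

@[simp] lemma mkC0_apply (f : X → ℝ) (hc : Continuous f) (hs : HasCompactSupport f) (x : X) :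
    mkC0 f hc hs x = f x := rfl

lemma C0_norm_le (f : C₀(X, ℝ)) {C : ℝ} (hC : 0 ≤ C) (h : ∀ x, |f x| ≤ C) : ‖f‖ ≤ C := by
  rw [← ZeroAtInftyContinuousMap.norm_toBCF_eq_norm]
  exact (BoundedContinuousFunction.norm_le hC).2 h

lemma C0_apply_le_norm (f : C₀(X, ℝ)) (x : X) : |f x| ≤ ‖f‖ := by
  rw [← ZeroAtInftyContinuousMap.norm_toBCF_eq_norm]
  exact (f.toBCF.norm_coe_le_norm x)

-- compactly supported approximation
lemma exists_cpt_approx (u : C₀(X, ℝ)) {ε : ℝ} (hε : 0 < ε) :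
    ∃ f : C₀(X, ℝ), HasCompactSupport ⇑f ∧ ‖f - u‖ ≤ ε / 2 := by
  have hK : IsCompact {x : X | ε / 2 ≤ |u x|} := by
    have hmem : Metric.ball (0:ℝ) (ε/2) ∈ nhds (0:ℝ) := Metric.ball_mem_nhds _ (by positivity)
    have h2 := (zero_at_infty u) hmem
    rw [Filter.mem_map, mem_cocompact] at h2
    obtain ⟨C, hCc, hsub⟩ := h2
    apply hCc.of_isClosed_subset
    · exact isClosed_le continuous_const (continuous_abs.comp (map_continuous u))
    · intro x hx
      by_contra hxC
      have := hsub hxC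
      simp only [mem_preimage, Metric.mem_ball, dist_zero_right, Real.norm_eq_abs] at this
      exact absurd hx (by simpa using not_le.2 this)
  obtain ⟨φ, hφ1, -, hφcs, hφ01⟩ :=
    exists_continuous_one_zero_of_isCompact hK isClosed_empty (disjoint_empty _)
  have hcs : HasCompactSupport fun x => φ x * u x := hφcs.mul_right
  refine ⟨mkC0 _ ((map_continuous φ).mul (map_continuous u)) hcs, hcs, ?_⟩
  apply C0_norm_le _ (by positivity)
  intro x
  simp only [ZeroAtInftyContinuousMap.sub_apply, mkC0_apply, Pi.mul_apply]
  by_cases hx : x ∈ {x : X | ε / 2 ≤ |u x|}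
  · rw [hφ1 hx]
    simp [le_of_lt (by positivity : (0:ℝ) < ε/2)]
  · have hux : |u x| ≤ ε / 2 := le_of_lt (not_le.1 hx)
    have : |φ x * u x - u x| = |φ x - 1| * |u x| := by
      rw [← abs_mul]; ring_nf
    rw [this]
    obtain ⟨h01a, h01b⟩ := Set.mem_Icc.1 (hφ01 x)
    have : |φ x - 1| ≤ 1 := by
      rw [abs_le]; constructor <;> linarith
    calc |φ x - 1| * |u x| ≤ 1 * (ε/2) :=
          mul_le_mul this hux (abs_nonneg _) zero_le_one
      _ = ε / 2 := one_mul _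

end aux3

section aux4
variable {X : Type*} [TopologicalSpace X] [T2Space X] (α : X ≃ₜ X) (w : X → ℝ)


lemma iterLI (n : ℕ) (x : X) : (⇑α.symm)^[n] ((⇑α)^[n] x) = x :=
  (Function.LeftInverse.iterate α.symm_apply_apply n) x

lemma iterRI (n : ℕ) (x : X) : (⇑α)^[n] ((⇑α.symm)^[n] x) = x :=
  (Function.LeftInverse.iterate α.apply_symm_apply n) x

lemma iterCancel {m n : ℕ} (h : m ≤ n) (x : X) :
    (⇑α.symm)^[m] ((⇑α)^[n] x) = (⇑α)^[n - m] x := by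
  conv_lhs => rw [show n = m + (n - m) by omega, Function.iterate_add_apply]
  exact iterLI α m _

lemma iterCancel' {m n : ℕ} (h : m ≤ n) (x : X) :
    (⇑α)^[m] ((⇑α.symm)^[n] x) = (⇑α.symm)^[n - m] x := by
  conv_lhs => rw [show n = m + (n - m) by omega, Function.iterate_add_apply]
  exact iterRI α m _

lemma zpowNat (m : ℕ) (t : X) : (α.toEquiv ^ (m : ℤ)) t = (⇑α)^[m] t := by
  rw [zpow_natCast, ← Equiv.Perm.iterate_eq_pow]; rfl

lemma zpowNegNat (m : ℕ) (t : X) : (α.toEquiv ^ (-(m : ℤ))) t = (⇑α.symm)^[m] t := by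
  rw [zpow_neg, zpow_natCast, ← inv_pow, ← Equiv.Perm.iterate_eq_pow]; rfl

/-- forward weighted-shift transfer -/
def TnFun (n : ℕ) (h : X → ℝ) : X → ℝ :=
  fun x => (∏ j ∈ Finset.range n, w ((⇑α)^[j] x)) * h ((⇑α)^[n] x)

/-- backward weighted-shift transfer -/
noncomputable def SnFun (n : ℕ) (h : X → ℝ) : X → ℝ :=
  fun x => (∏ k ∈ Finset.range n, (w ((⇑α.symm)^[k + 1] x))⁻¹) * h ((⇑α.symm)^[n] x)

lemma TnFun_continuous (hwc : Continuous w) (n : ℕ) {h : X → ℝ} (hc : Continuous h) :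
    Continuous (TnFun α w n h) :=
  ((continuous_finset_prod _ fun j _ => hwc.comp (α.continuous.iterate j))).mul
    (hc.comp (α.continuous.iterate n))

lemma SnFun_continuous (hwc : Continuous w) (hwpos : ∀ x, 0 < w x) (n : ℕ)
    {h : X → ℝ} (hc : Continuous h) : Continuous (SnFun α w n h) :=
  ((continuous_finset_prod _ fun k _ =>
      (hwc.comp (α.symm.continuous.iterate (k + 1))).inv₀
        (fun x => ne_of_gt (hwpos _)))).mul
    (hc.comp (α.symm.continuous.iterate n))

lemma TnFun_support (n : ℕ) {h : X → ℝ} (hs : HasCompactSupport h) :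
    HasCompactSupport (TnFun α w n h) := by
  apply HasCompactSupport.intro (hs.image (α.symm.continuous.iterate n))
  intro x hx
  have hout : (⇑α)^[n] x ∉ tsupport h := by
    intro hmem
    exact hx ⟨(⇑α)^[n] x, hmem, iterLI α n x⟩
  simp [TnFun, image_eq_zero_of_notMem_tsupport hout]

lemma SnFun_support (n : ℕ) {h : X → ℝ} (hs : HasCompactSupport h) :
    HasCompactSupport (SnFun α w n h) := by
  apply HasCompactSupport.intro (hs.image (α.continuous.iterate n))
  intro x hx
  have hout : (⇑α.symm)^[n] x ∉ tsupport h := by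
    intro hmem
    exact hx ⟨(⇑α.symm)^[n] x, hmem, iterRI α n x⟩
  simp [SnFun, image_eq_zero_of_notMem_tsupport hout]

lemma TnSn_cancel (hwpos : ∀ x, 0 < w x) (n : ℕ) (h : X → ℝ) (x : X) :
    TnFun α w n (SnFun α w n h) x = h x := by
  simp only [TnFun, SnFun, iterLI]
  have h1 : ∀ k ∈ Finset.range n,
      (w ((⇑α.symm)^[k + 1] ((⇑α)^[n] x)))⁻¹ = (w ((⇑α)^[n - 1 - k] x))⁻¹ := by
    intro k hk
    have hk' := Finset.mem_range.1 hk
    rw [iterCancel α (by omega : k + 1 ≤ n)]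
    have : n - (k + 1) = n - 1 - k := by omega
    rw [this]
  rw [Finset.prod_congr rfl h1, Finset.prod_range_reflect (fun j => (w ((⇑α)^[j] x))⁻¹) n,
    Finset.prod_inv_distrib]
  have hne : (∏ j ∈ Finset.range n, w ((⇑α)^[j] x)) ≠ 0 :=
    ne_of_gt (Finset.prod_pos fun j _ => hwpos _)
  rw [← mul_assoc, mul_inv_cancel₀ hne, one_mul]

lemma iter_formula (n : ℕ) (F : X → ℝ) (x : X) :
    (fun F : X → ℝ => fun y => w y * F (α y))^[n] F x
      = (∏ j ∈ Finset.range n, w ((⇑α)^[j] x)) * F ((⇑α)^[n] x) := by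
  induction n generalizing x with
  | zero => simp
  | succ n ih =>
    rw [Function.iterate_succ_apply']
    show w x * (fun F : X → ℝ => fun y => w y * F (α y))^[n] F (α x) = _
    rw [ih]
    have h1 : ∀ j, (⇑α)^[j] (α x) = (⇑α)^[j + 1] x := by
      intro j; rw [← Function.iterate_succ_apply]
    simp only [h1]
    rw [Finset.prod_range_succ' (fun j => w ((⇑α)^[j] x)) n]
    simp only [Function.iterate_zero_apply]
    ring


end aux4
section bounds
variable {X : Type*} [TopologicalSpace X] [LocallyCompactSpace X] [T2Space X] (α : X ≃ₜ X) (w : X → ℝ)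

lemma Tn_bound (hwc : Continuous w) (n : ℕ) (h : C₀(X, ℝ)) (hs : HasCompactSupport ⇑h)
    (x : X) :
    |TnFun α w n (⇑h) x| ≤
      (⨆ t ∈ tsupport ⇑h, ∏ j ∈ Finset.range n,
        |w ((α.toEquiv ^ ((j : ℤ) - (n : ℤ))) t)|) * ‖h‖ := by
  set K := tsupport ⇑h with hKdef
  set G : X → ℝ := fun t => ∏ j ∈ Finset.range n, |w ((⇑α.symm)^[n - j] t)| with hGdef
  have hGeq : ∀ t : X,
      (∏ j ∈ Finset.range n, |w ((α.toEquiv ^ ((j : ℤ) - (n : ℤ))) t)|) = G t := by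
    intro t
    refine Finset.prod_congr rfl fun j hj => ?_
    have hj' := Finset.mem_range.1 hj
    have hz : (j : ℤ) - (n : ℤ) = -(((n - j : ℕ)) : ℤ) := by omega
    rw [hz, zpowNegNat]
  have hsup : (⨆ t ∈ K, ∏ j ∈ Finset.range n,
      |w ((α.toEquiv ^ ((j : ℤ) - (n : ℤ))) t)|) = ⨆ t ∈ K, G t := by
    congr 1; funext t; congr 1; funext ht; exact hGeq t
  rw [hsup]
  have hGc : Continuous G :=
    continuous_finset_prod _ fun j _ => (hwc.comp (α.symm.continuous.iterate (n - j))).abs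
  have hG0 : ∀ t, 0 ≤ G t := fun t => Finset.prod_nonneg fun j _ => abs_nonneg _
  have hsupnn : 0 ≤ ⨆ t ∈ K, G t := biSup_nonneg hG0
  by_cases hx : (⇑α)^[n] x ∈ K
  · have hprod : (∏ j ∈ Finset.range n, |w ((⇑α)^[j] x)|) = G ((⇑α)^[n] x) := by
      refine Finset.prod_congr rfl fun j hj => ?_
      have hj' := Finset.mem_range.1 hj
      rw [iterCancel α (Nat.sub_le n j), show n - (n - j) = j by omega]
    have h1 : |TnFun α w n (⇑h) x|
        = (∏ j ∈ Finset.range n, |w ((⇑α)^[j] x)|) * |h ((⇑α)^[n] x)| := by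
      rw [TnFun, abs_mul, Finset.abs_prod]
    rw [h1, hprod]
    exact mul_le_mul (le_biSup_cpt hs hGc hG0 hx) (C0_apply_le_norm h _)
      (abs_nonneg _) hsupnn
  · have : h ((⇑α)^[n] x) = 0 := image_eq_zero_of_notMem_tsupport hx
    rw [TnFun]
    simp only [this, mul_zero, abs_zero]
    exact mul_nonneg hsupnn (norm_nonneg _)

lemma Sn_bound (hwc : Continuous w) (hwpos : ∀ x, 0 < w x) (n : ℕ) (h : C₀(X, ℝ)) (hs : HasCompactSupport ⇑h)
    (x : X) :
    |SnFun α w n (⇑h) x| ≤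
      (⨆ t ∈ tsupport ⇑h, ∏ j ∈ Finset.range n,
        |w ((α.toEquiv ^ (j : ℤ)) t)|⁻¹) * ‖h‖ := by
  set K := tsupport ⇑h with hKdef
  set G : X → ℝ := fun t => ∏ j ∈ Finset.range n, |w ((⇑α)^[j] t)|⁻¹ with hGdef
  simp only [zpowNat α]
  have hGc : Continuous G :=
    continuous_finset_prod _ fun j _ =>
      ((hwc.comp (α.continuous.iterate j)).abs).inv₀
        (fun t => ne_of_gt (abs_pos.2 (ne_of_gt (hwpos _))))
  have hG0 : ∀ t, 0 ≤ G t := fun t =>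
    Finset.prod_nonneg fun j _ => inv_nonneg.2 (abs_nonneg _)
  have hsupnn : 0 ≤ ⨆ t ∈ K, G t := biSup_nonneg hG0
  by_cases ht0 : (⇑α.symm)^[n] x ∈ K
  · set t₀ := (⇑α.symm)^[n] x with ht₀def
    have hxeq : x = (⇑α)^[n] t₀ := (iterRI α n x).symm
    have hprod : (∏ k ∈ Finset.range n, |w ((⇑α.symm)^[k + 1] x)|⁻¹) = G t₀ := by
      have h2 : ∀ k ∈ Finset.range n,
          |w ((⇑α.symm)^[k + 1] x)|⁻¹ = |w ((⇑α)^[n - 1 - k] t₀)|⁻¹ := by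
        intro k hk
        have hk' := Finset.mem_range.1 hk
        rw [hxeq, iterCancel α (by omega : k + 1 ≤ n)]
        have : n - (k + 1) = n - 1 - k := by omega
        rw [this]
      rw [Finset.prod_congr rfl h2,
        Finset.prod_range_reflect (fun j => |w ((⇑α)^[j] t₀)|⁻¹) n]
    have h1 : |SnFun α w n (⇑h) x|
        = (∏ k ∈ Finset.range n, |w ((⇑α.symm)^[k + 1] x)|⁻¹) * |h t₀| := by
      rw [SnFun, abs_mul, Finset.abs_prod]
      simp only [abs_inv]
      rfl
    rw [h1, hprod]
    exact mul_le_mul (le_biSup_cpt hs hGc hG0 ht0) (C0_apply_le_norm h _)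
      (abs_nonneg _) hsupnn
  · have : h ((⇑α.symm)^[n] x) = 0 := image_eq_zero_of_notMem_tsupport ht0
    rw [SnFun]
    simp only [this, mul_zero, abs_zero]
    exact mul_nonneg hsupnn (norm_nonneg _)

end bounds
/-- Under the stated run-away and weight-product decay conditions,
the weighted composition operator `U_{α,w}(f) = w·(f∘α)` is topologically mixing
on `C₀(X)`. -/
theorem weighted_composition_mixing
    {X : Type*} [TopologicalSpace X] [LocallyCompactSpace X] [T2Space X]
    (α : X ≃ₜ X) (w : X → ℝ)
    (hwc : Continuous w) (hwpos : ∀ x, 0 < w x)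
    (hwb : ∃ C : ℝ, (⨆ x : X, |w x|) + (⨆ x : X, |w x|⁻¹) ≤ C)
    (hrunaway : ∀ K : Set X, IsCompact K →
      ∃ N : ℕ, ∀ n ≥ N, ((⇑α)^[n] '' K) ∩ K = ∅)
    (hdecay : ∀ K : Set X, IsCompact K →
      Tendsto (fun n : ℕ =>
          ⨆ t ∈ K, ∏ j ∈ Finset.range n, |w ((α.toEquiv ^ ((j : ℤ) - (n : ℤ))) t)|)
        atTop (nhds 0) ∧
      Tendsto (fun n : ℕ =>
          ⨆ t ∈ K, ∏ j ∈ Finset.range n, |w ((α.toEquiv ^ (j : ℤ)) t)|⁻¹)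
        atTop (nhds 0)) :
    ∀ U V : Set C₀(X, ℝ), IsOpen U → IsOpen V → U.Nonempty → V.Nonempty →
      ∃ N : ℕ, ∀ n ≥ N, ∃ f ∈ U, ∃ g : C₀(X, ℝ), g ∈ V ∧
        ∀ x : X, g x = (fun F : X → ℝ => fun y => w y * F (α y))^[n] (⇑f) x := by
  rintro U V hU hV ⟨u, hu⟩ ⟨v, hv⟩
  obtain ⟨εu, hεu, hballu⟩ := Metric.isOpen_iff.1 hU u hu
  obtain ⟨εv, hεv, hballv⟩ := Metric.isOpen_iff.1 hV v hv
  obtain ⟨f₀, hf₀cs, hf₀u⟩ := exists_cpt_approx u hεu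
  obtain ⟨g₀, hg₀cs, hg₀v⟩ := exists_cpt_approx v hεv
  set Pn : ℕ → ℝ := fun n =>
    ⨆ t ∈ tsupport ⇑f₀, ∏ j ∈ Finset.range n,
      |w ((α.toEquiv ^ ((j : ℤ) - (n : ℤ))) t)| with hPndef
  set Qn : ℕ → ℝ := fun n =>
    ⨆ t ∈ tsupport ⇑g₀, ∏ j ∈ Finset.range n,
      |w ((α.toEquiv ^ (j : ℤ)) t)|⁻¹ with hQndef
  have hP : Tendsto Pn atTop (nhds 0) := (hdecay _ hf₀cs).1
  have hQ : Tendsto Qn atTop (nhds 0) := (hdecay _ hg₀cs).2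
  have hP' : Tendsto (fun n => Pn n * ‖f₀‖) atTop (nhds 0) := by
    have := hP.mul_const ‖f₀‖; rwa [zero_mul] at this
  have hQ' : Tendsto (fun n => Qn n * ‖g₀‖) atTop (nhds 0) := by
    have := hQ.mul_const ‖g₀‖; rwa [zero_mul] at this
  have hPev : ∀ᶠ n in atTop, Pn n * ‖f₀‖ < εv / 2 :=
    hP'.eventually_lt_const (show (0:ℝ) < εv / 2 by positivity)
  have hQev : ∀ᶠ n in atTop, Qn n * ‖g₀‖ < εu / 2 :=
    hQ'.eventually_lt_const (show (0:ℝ) < εu / 2 by positivity)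
  obtain ⟨N, hN⟩ := eventually_atTop.1 (hPev.and hQev)
  refine ⟨N, fun n hn => ?_⟩
  obtain ⟨hPn, hQn⟩ := hN n hn
  -- the C₀ pieces
  set S : C₀(X, ℝ) := mkC0 (SnFun α w n ⇑g₀)
    (SnFun_continuous α w hwc hwpos n (map_continuous g₀))
    (SnFun_support α w n hg₀cs) with hSdef
  set T : C₀(X, ℝ) := mkC0 (TnFun α w n ⇑f₀)
    (TnFun_continuous α w hwc n (map_continuous f₀))
    (TnFun_support α w n hf₀cs) with hTdef
  have hSnorm : ‖S‖ ≤ Qn n * ‖g₀‖ := by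
    apply C0_norm_le _ (mul_nonneg (biSup_nonneg fun t =>
      Finset.prod_nonneg fun j _ => inv_nonneg.2 (abs_nonneg _)) (norm_nonneg _))
    intro x
    exact Sn_bound α w hwc hwpos n g₀ hg₀cs x
  have hTnorm : ‖T‖ ≤ Pn n * ‖f₀‖ := by
    apply C0_norm_le _ (mul_nonneg (biSup_nonneg fun t =>
      Finset.prod_nonneg fun j _ => abs_nonneg _) (norm_nonneg _))
    intro x
    exact Tn_bound α w hwc n f₀ hf₀cs x
  refine ⟨f₀ + S, ?_, T + g₀, ?_, ?_⟩
  · apply hballu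
    rw [Metric.mem_ball, dist_eq_norm, show f₀ + S - u = (f₀ - u) + S by abel]
    calc ‖(f₀ - u) + S‖ ≤ ‖f₀ - u‖ + ‖S‖ := norm_add_le _ _
      _ ≤ εu / 2 + (Qn n * ‖g₀‖) := add_le_add hf₀u hSnorm
      _ < εu / 2 + εu / 2 := by linarith
      _ = εu := by ring
  · apply hballv
    rw [Metric.mem_ball, dist_eq_norm, show T + g₀ - v = T + (g₀ - v) by abel]
    calc ‖T + (g₀ - v)‖ ≤ ‖T‖ + ‖g₀ - v‖ := norm_add_le _ _
      _ ≤ (Pn n * ‖f₀‖) + εv / 2 := add_le_add hTnorm hg₀v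
      _ < εv / 2 + εv / 2 := by linarith
      _ = εv := by ring
  · intro x
    rw [iter_formula]
    have hcoe : ∀ y, (⇑(f₀ + S)) y = f₀ y + SnFun α w n (⇑g₀) y := fun y => rfl
    have hcoe2 : (⇑(T + g₀)) x = TnFun α w n (⇑f₀) x + g₀ x := rfl
    rw [hcoe2, hcoe, mul_add]
    have : (∏ j ∈ Finset.range n, w ((⇑α)^[j] x)) * SnFun α w n (⇑g₀) ((⇑α)^[n] x)
        = TnFun α w n (SnFun α w n ⇑g₀) x := rfl
    rw [this, TnSn_cancel α w hwpos]
    rfl
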